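/- Let i, d, m be positive integers with m·d < i < m·(d+1). For s = 1, …, d define π_s : ℝ^i → ℂ by π_s(u_0, …, u_{i−1}) = ∑_{j=0}^{i−1} u_j · exp(2πi·sj/i). Let Δ^{i−m} ⊆ Δ^{i−1} be the convex hull of the vertices e_0, e_1, …, e_{i−m} (where e_j is the j-th standard basis vector), and let C_i act on Δ^{i−1} by cyclic permutation of coordinates. Then for every u in the C_i-orbit of Δ^{i−m}, the vector (π_1(u), …, π_d(u)) ∈ ℂ^d is nonzero. -/

import Mathlib

open Complex Real Finset

/-- Product-to-sum telescoping identity: for `α = π/(d+1)`,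
`∑_{k<d-1} sin((k+1)α)sin((k+2)α) = cos α · ∑_{k<d} sin((k+1)α)²`. -/
lemma sin_cos_sum_identity (d : ℕ) (hd : 0 < d) :
    ∑ k ∈ Finset.range (d - 1),
        Real.sin ((k+1) * (π/(d+1))) * Real.sin ((k+2) * (π/(d+1)))
      = Real.cos (π/(d+1)) * ∑ k ∈ Finset.range d, Real.sin ((k+1) * (π/(d+1)))^2 := by
  obtain ⟨n, rfl⟩ : ∃ n, d = n + 1 := ⟨d - 1, by omega⟩
  have hrr : (n + 1) - 1 = n := by omega
  rw [hrr]
  push_cast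
  set α := π/((n:ℝ)+1+1) with hα
  set C : ℕ → ℝ := fun k => Real.cos ((2*k+1) * α) with hCdef
  have hd1 : (n:ℝ) + 1 + 1 ≠ 0 := by positivity
  have hC0 : C 0 = Real.cos α := by simp [hCdef]
  have hCd : C (n+1) = Real.cos α := by
    have harg : (2*((n:ℝ)+1)+1) * α = 2*π - α := by
      rw [hα]; field_simp; ring
    simp only [hCdef]
    push_cast
    rw [harg, Real.cos_two_pi_sub]
  have hprod : ∀ k : ℕ, Real.sin ((k+1) * α) * Real.sin ((k+2) * α)
      = (Real.cos α - C (k+1))/2 := by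
    intro k
    have h1 : Real.sin ((k+1) * α) * Real.sin ((k+2) * α)
        = (Real.cos ((k+1)*α - (k+2)*α) - Real.cos ((k+1)*α + (k+2)*α))/2 := by
      rw [Real.cos_sub, Real.cos_add]; ring
    rw [h1]
    have h2 : (k+1)*α - (k+2)*α = -α := by ring
    have h3 : (k+1)*α + (k+2)*α = (2*((k:ℝ)+1)+1) * α := by ring
    rw [h2, h3, Real.cos_neg, hCdef]
    push_cast
    ring_nf
  have hcc : ∀ k : ℕ, Real.cos α * Real.cos (2*((k:ℝ)+1) * α) = (C (k+1) + C k)/2 := by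
    intro k
    have h1 : Real.cos α * Real.cos (2*((k:ℝ)+1)*α)
        = (Real.cos (α + 2*((k:ℝ)+1)*α) + Real.cos (α - 2*((k:ℝ)+1)*α))/2 := by
      rw [Real.cos_add, Real.cos_sub]; ring
    rw [h1, hCdef]
    have h2 : α + 2*((k:ℝ)+1)*α = (2*((k:ℝ)+1)+1)*α := by ring
    have h3 : α - 2*((k:ℝ)+1)*α = -((2*(k:ℝ)+1)*α) := by ring
    rw [h2, h3, Real.cos_neg]
    push_cast
    ring_nf
  have hsq2 : ∀ k : ℕ, Real.sin ((k+1)*α)^2 = 1/2 - Real.cos (2*((k:ℝ)+1)*α)/2 := by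
    intro k
    rw [Real.sin_sq_eq_half_sub ((k+1)*α)]
    congr 2
    ring
  set T : ℝ := ∑ k ∈ Finset.range n, C (k+1) with hT
  have hsum1 : ∑ k ∈ Finset.range (n+1), C (k+1) = T + C (n+1) :=
    Finset.sum_range_succ (fun k => C (k+1)) n
  have hsum0 : ∑ k ∈ Finset.range (n+1), C k = T + C 0 :=
    Finset.sum_range_succ' C n
  have hLHS : ∑ k ∈ Finset.range n,
      Real.sin ((k+1) * α) * Real.sin ((k+2) * α) = ((n:ℝ) * Real.cos α - T)/2 := by
    rw [Finset.sum_congr rfl (fun k _ => hprod k), ← Finset.sum_div,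
      Finset.sum_sub_distrib, Finset.sum_const, Finset.card_range, nsmul_eq_mul, hT]
  have hA : ∑ k ∈ Finset.range (n+1), Real.cos α * (Real.cos (2*((k:ℝ)+1)*α)/2)
      = (T + Real.cos α)/2 := by
    have hq : ∀ k ∈ Finset.range (n+1), Real.cos α * (Real.cos (2*((k:ℝ)+1)*α)/2)
        = (C (k+1) + C k)/4 := fun k _ => by linarith [hcc k]
    rw [Finset.sum_congr rfl hq, ← Finset.sum_div, Finset.sum_add_distrib,
      hsum1, hsum0, hC0, hCd]
    ring
  rw [hLHS, Finset.sum_congr rfl (fun k _ => hsq2 k), Finset.mul_sum]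
  have hq2 : ∀ k ∈ Finset.range (n+1),
      Real.cos α * (1/2 - Real.cos (2*((k:ℝ)+1)*α)/2)
      = Real.cos α/2 - Real.cos α * (Real.cos (2*((k:ℝ)+1)*α)/2) := fun k _ => by ring
  rw [Finset.sum_congr rfl hq2, Finset.sum_sub_distrib, hA, Finset.sum_const,
    Finset.card_range, nsmul_eq_mul]
  push_cast
  ring

set_option maxHeartbeats 1000000 in
/-- Hesselholt–Madsen's nonvanishing: for `m·d < i < m·(d+1)`, the projection
`π_d = (π_1, …, π_d) : ℝ[C_i] → λ_d` does not vanish on the `C_i`-orbit of the face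
`Δ^{i−m} ⊆ Δ^{i−1}` spanned by the vertices `e_0, …, e_{i−m}`. Here
`π_s(u) = ∑_j u_j·exp(2πi·sj/i)`. -/
theorem projection_nonvanishing_on_orbit (i d m : ℕ)
    (hi : 0 < i) (hd : 0 < d) (hm : 0 < m)
    (h1 : m * d < i) (h2 : i < m * (d + 1))
    -- `w` lies in the face `Δ^{i−m}`, the convex hull of the vertices `e_0, …, e_{i−m}`
    (w : Fin i → ℝ) (hw : w ∈ stdSimplex ℝ (Fin i))
    (hsupp : ∀ j : Fin i, i - m < (j : ℕ) → w j = 0)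
    -- `c` gives an arbitrary element `ξ_i^c` of `C_i`, acting by cyclic permutation
    (c : Fin i) :
    ∃ s : ℕ, 1 ≤ s ∧ s ≤ d ∧
      ∑ j : Fin i, (w (j - c) : ℂ) *
        Complex.exp (2 * Real.pi * Complex.I * (s : ℂ) * (j : ℕ) / (i : ℂ)) ≠ 0 := by
  by_contra hcon
  push_neg at hcon
  haveI : NeZero i := ⟨hi.ne'⟩
  have hiC : (i : ℂ) ≠ 0 := Nat.cast_ne_zero.mpr hi.ne'
  have hiR : (0:ℝ) < (i:ℝ) := by exact_mod_cast hi
  -- periodicity of the character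
  have hper : ∀ s : ℕ, ∀ a : ℕ,
      Complex.exp (2 * Real.pi * Complex.I * (s:ℂ) * ((a % i : ℕ) : ℂ) / (i : ℂ))
        = Complex.exp (2 * Real.pi * Complex.I * (s:ℂ) * (a:ℂ) / (i : ℂ)) := by
    intro s a
    have hmod : (a:ℂ) = ((a % i : ℕ) : ℂ) + ((a / i : ℕ) : ℂ) * (i:ℂ) := by
      have h := Nat.mod_add_div a i
      conv_lhs => rw [← h]
      push_cast
      ring
    rw [hmod]
    have : 2 * (Real.pi:ℂ) * Complex.I * (s:ℂ) * (((a % i : ℕ) : ℂ) + ((a / i : ℕ):ℂ) * (i:ℂ)) / (i:ℂ)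
        = 2 * (Real.pi:ℂ) * Complex.I * (s:ℂ) * ((a % i : ℕ) : ℂ) / (i:ℂ)
          + ((s * (a / i) : ℕ) : ℂ) * (2 * (Real.pi:ℂ) * Complex.I) := by
      push_cast
      field_simp
    rw [this, Complex.exp_add, Complex.exp_nat_mul_two_pi_mul_I, mul_one]
  -- the unshifted sums vanish
  have hvan : ∀ s : ℕ, 1 ≤ s → s ≤ d →
      ∑ j : Fin i, (w j : ℂ) *
        Complex.exp (2 * Real.pi * Complex.I * (s : ℂ) * ((j : Fin i) : ℕ) / (i : ℂ)) = 0 := by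
    intro s hs1 hs2
    have h0 := hcon s hs1 hs2
    have hre : ∑ j : Fin i, (w (j - c) : ℂ) *
          Complex.exp (2 * Real.pi * Complex.I * (s : ℂ) * ((j : Fin i) : ℕ) / (i : ℂ))
        = ∑ j : Fin i, (w j : ℂ) *
          Complex.exp (2 * Real.pi * Complex.I * (s : ℂ) * ((j + c : Fin i) : ℕ) / (i : ℂ)) := by
      rw [← Equiv.sum_comp (Equiv.addRight c)
        (fun j : Fin i => (w (j - c) : ℂ) *
          Complex.exp (2 * Real.pi * Complex.I * (s : ℂ) * ((j : Fin i) : ℕ) / (i : ℂ)))]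
      refine Finset.sum_congr rfl fun j _ => ?_
      simp [Equiv.coe_addRight]
    have hfac : ∀ j : Fin i,
        Complex.exp (2 * Real.pi * Complex.I * (s : ℂ) * ((j + c : Fin i) : ℕ) / (i : ℂ))
        = Complex.exp (2 * Real.pi * Complex.I * (s : ℂ) * ((j : ℕ) : ℂ) / (i : ℂ))
          * Complex.exp (2 * Real.pi * Complex.I * (s : ℂ) * ((c : ℕ) : ℂ) / (i : ℂ)) := by
      intro j
      have hval : ((j + c : Fin i) : ℕ) = ((j : ℕ) + (c : ℕ)) % i := Fin.val_add j c
      rw [hval, hper s ((j:ℕ) + (c:ℕ)), ← Complex.exp_add]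
      congr 1
      push_cast
      ring
    rw [hre, Finset.sum_congr rfl (fun j _ => by rw [hfac j, ← mul_assoc]),
      ← Finset.sum_mul] at h0
    rcases mul_eq_zero.mp h0 with h | h
    · exact h
    · exact absurd h (Complex.exp_ne_zero _)
  -- setup
  set α : ℝ := π / ((d:ℝ)+1) with hαdef
  set γ : ℝ := π * ((i - m : ℕ) : ℝ) / (i:ℝ) with hγdef
  set ψ : Fin i → ℝ := fun j => 2 * π * ((j:ℕ):ℝ) / (i:ℝ) - γ with hψdef
  set u : Fin i → ℂ := fun j => Complex.exp ((ψ j : ℂ) * Complex.I) with hudef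
  set b : ℕ → ℝ := fun k => (-1:ℝ)^k * Real.sin ((k+1) * α) with hbdef
  set G : ℤ → ℂ := fun s => ∑ j : Fin i, (w j : ℂ) * (u j) ^ s with hGdef
  have hu_ne : ∀ j, u j ≠ 0 := fun j => Complex.exp_ne_zero _
  have hzpow : ∀ (j : Fin i) (s : ℤ),
      (u j) ^ s = Complex.exp ((s:ℂ) * (ψ j : ℂ) * Complex.I) := by
    intro j s
    rw [hudef, ← Complex.exp_int_mul]
    congr 1
    ring
  have hw0 : ∀ j, 0 ≤ w j := hw.1
  have hw1 : ∑ j : Fin i, w j = 1 := hw.2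
  have hG0 : G 0 = 1 := by
    simp only [hGdef, zpow_zero, mul_one]
    rw [← Complex.ofReal_sum, hw1, Complex.ofReal_one]
  have hGnat : ∀ s : ℕ, 1 ≤ s → s ≤ d → G (s:ℤ) = 0 := by
    intro s hs1 hs2
    have hterm : ∀ j : Fin i, (w j : ℂ) * (u j)^(s:ℤ)
        = ((w j : ℂ) * Complex.exp (2 * Real.pi * Complex.I * (s : ℂ) * ((j:ℕ):ℂ) / (i : ℂ)))
          * Complex.exp (-(((s * γ : ℝ)):ℂ) * Complex.I) := by
      intro j
      have harg : 2 * (Real.pi:ℂ) * Complex.I * (s : ℂ) * ((j:ℕ):ℂ) / (i : ℂ)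
          + (-(((s * γ : ℝ)):ℂ) * Complex.I) = ((s:ℤ):ℂ) * ((ψ j : ℝ):ℂ) * Complex.I := by
        simp only [hψdef]
        push_cast
        field_simp
        ring
      rw [hzpow j (s:ℤ), ← harg, Complex.exp_add]
      ring
    rw [hGdef]
    simp only []
    rw [Finset.sum_congr rfl (fun j _ => hterm j), ← Finset.sum_mul, hvan s hs1 hs2, zero_mul]
  have hGconj : ∀ s : ℤ, G (-s) = (starRingEnd ℂ) (G s) := by
    intro s
    rw [hGdef]
    simp only [map_sum, map_mul, Complex.conj_ofReal]
    refine Finset.sum_congr rfl fun j _ => ?_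
    congr 1
    rw [map_zpow₀]
    have hconj : (starRingEnd ℂ) (u j) = (u j)⁻¹ := by
      rw [hudef]
      simp only []
      rw [← Complex.exp_conj, ← Complex.exp_neg]
      congr 1
      simp [Complex.conj_ofReal]
    rw [hconj, inv_zpow, ← zpow_neg]
  have hGz : ∀ s : ℤ, s ≠ 0 → s.natAbs ≤ d → G s = 0 := by
    intro s hs hsd
    rcases lt_trichotomy s 0 with hneg | hzero | hpos
    · have hs' : s = -((s.natAbs : ℕ) : ℤ) := by omega
      rw [hs', hGconj, hGnat s.natAbs (by omega) (by omega), map_zero]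
    · exact absurd hzero hs
    · have hs' : s = ((s.natAbs : ℕ) : ℤ) := by omega
      rw [hs', hGnat s.natAbs (by omega) (by omega)]
  -- the quadratic-form sum, computed in two ways
  set cγ : ℝ := Real.cos γ with hcγdef
  set t : ℕ → ℕ → Fin i → ℂ := fun k l j =>
    (w j : ℂ) * ((b k : ℂ) * (b l : ℂ)) *
      ((cγ : ℂ) * (u j)^((k:ℤ) - (l:ℤ))
        - ((u j)^((k:ℤ) - (l:ℤ) + 1) + (u j)^((k:ℤ) - (l:ℤ) - 1))/2) with htdef
  set S : ℂ := ∑ k ∈ Finset.range d, ∑ l ∈ Finset.range d, ∑ j : Fin i, t k l j with hSdef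
  -- Way 1 : via the Fourier coefficients G
  have hinner : ∀ (B : ℂ) (s : ℤ),
      ∑ j : Fin i, (w j : ℂ) * B *
          ((cγ:ℂ) * (u j)^s - ((u j)^(s+1) + (u j)^(s-1))/2)
        = B * ((cγ:ℂ) * G s - (G (s+1) + G (s-1))/2) := by
    intro B s
    have hterm : ∀ j : Fin i, (w j : ℂ) * B *
          ((cγ:ℂ) * (u j)^s - ((u j)^(s+1) + (u j)^(s-1))/2)
        = B * ((cγ:ℂ) * ((w j:ℂ) * (u j)^s)
            - (((w j:ℂ) * (u j)^(s+1)) + ((w j:ℂ) * (u j)^(s-1)))/2) := fun j => by ring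
    rw [Finset.sum_congr rfl (fun j _ => hterm j), ← Finset.mul_sum]
    congr 1
    rw [Finset.sum_sub_distrib, ← Finset.mul_sum, ← Finset.sum_div, Finset.sum_add_distrib]
  have hway1 : S = (((cγ * (∑ k ∈ Finset.range d, (b k)^2)
      - (∑ k ∈ Finset.range (d-1), (b k) * (b (k+1))) : ℝ)) : ℂ) := by
    have hV : ∀ k ∈ Finset.range d, ∀ l ∈ Finset.range d,
        ∑ j : Fin i, t k l j
          = (if l = k then (((cγ * (b k)^2 : ℝ)):ℂ) else 0)
            + (if l = k + 1 then ((-(b k * b l / 2) : ℝ) : ℂ) else 0)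
            + (if k = l + 1 then ((-(b k * b l / 2) : ℝ) : ℂ) else 0) := by
      intro k hk l hl
      rw [Finset.mem_range] at hk hl
      rw [htdef]
      simp only []
      rw [hinner ((b k : ℂ) * (b l : ℂ)) ((k:ℤ) - (l:ℤ))]
      by_cases h1' : l = k
      · subst h1'
        have hne : ¬ l = l + 1 := by omega
        rw [if_pos rfl, if_neg hne]
        rw [sub_self, hG0]
        norm_num
        rw [hGz 1 (by omega) (by omega), hGz (-1) (by omega) (by omega)]
        push_cast
        ring
      · by_cases h2' : l = k + 1
        · subst h2'
          rw [if_neg h1', if_pos rfl, if_neg (by omega)]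
          have e1 : (k:ℤ) - (k+1:ℕ) = -1 := by push_cast; ring
          rw [e1]
          norm_num
          rw [hG0, hGz (-1) (by omega) (by omega), hGz (-2) (by omega) (by omega)]
          push_cast
          ring
        · by_cases h3' : k = l + 1
          · subst h3'
            rw [if_neg h1', if_neg h2', if_pos rfl]
            have e1 : ((l+1:ℕ):ℤ) - (l:ℤ) = 1 := by push_cast; ring
            rw [e1]
            norm_num
            rw [hG0, hGz 1 (by omega) (by omega), hGz 2 (by omega) (by omega)]
            push_cast
            ring
          · rw [if_neg h1', if_neg h2', if_neg h3']
            rw [hGz ((k:ℤ)-(l:ℤ)) (by omega) (by omega),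
              hGz ((k:ℤ)-(l:ℤ)+1) (by omega) (by omega),
              hGz ((k:ℤ)-(l:ℤ)-1) (by omega) (by omega)]
            norm_num
    rw [hSdef, Finset.sum_congr rfl (fun k hk =>
      Finset.sum_congr rfl (fun l hl => hV k hk l hl))]
    have hsplit : ∀ k ∈ Finset.range d,
        ∑ l ∈ Finset.range d,
          ((if l = k then (((cγ * (b k)^2 : ℝ)):ℂ) else 0)
            + (if l = k + 1 then ((-(b k * b l / 2) : ℝ) : ℂ) else 0)
            + (if k = l + 1 then ((-(b k * b l / 2) : ℝ) : ℂ) else 0))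
        = (((cγ * (b k)^2 : ℝ)):ℂ)
          + (if k + 1 < d then ((-(b k * b (k+1) / 2) : ℝ) : ℂ) else 0)
          + ∑ l ∈ Finset.range d, (if k = l + 1 then ((-(b k * b l / 2) : ℝ) : ℂ) else 0) := by
      intro k hk
      simp only [Finset.sum_add_distrib]
      congr 2
      · rw [Finset.sum_ite_eq' (Finset.range d) k
          (fun l => (((cγ * (b k)^2 : ℝ)):ℂ)), if_pos hk]
      · rw [Finset.sum_ite_eq' (Finset.range d) (k+1)
          (fun l => ((-(b k * b l / 2) : ℝ) : ℂ))]
        by_cases h : k + 1 < d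
        · rw [if_pos (Finset.mem_range.mpr h), if_pos h]
        · rw [if_neg (fun hc => h (Finset.mem_range.mp hc)), if_neg h]
    rw [Finset.sum_congr rfl hsplit]
    rw [Finset.sum_add_distrib]
    -- handle the last (transposed) family by swapping the summation order
    have hswap : ∑ k ∈ Finset.range d, ∑ l ∈ Finset.range d,
          (if k = l + 1 then ((-(b k * b l / 2) : ℝ) : ℂ) else 0)
        = ∑ k ∈ Finset.range d,
            (if k + 1 < d then ((-(b (k+1) * b k / 2) : ℝ) : ℂ) else 0) := by
      rw [Finset.sum_comm]
      refine Finset.sum_congr rfl fun l hl => ?_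
      rw [Finset.sum_ite_eq' (Finset.range d) (l+1)
        (fun k => ((-(b k * b l / 2) : ℝ) : ℂ))]
      by_cases h : l + 1 < d
      · rw [if_pos (Finset.mem_range.mpr h), if_pos h]
      · rw [if_neg (fun hc => h (Finset.mem_range.mp hc)), if_neg h]
    rw [hswap, Finset.sum_add_distrib]
    have htrunc : ∀ f : ℕ → ℂ, ∑ k ∈ Finset.range d, (if k + 1 < d then f k else 0)
        = ∑ k ∈ Finset.range (d-1), f k := by
      intro f
      have hdd : d = (d-1) + 1 := by omega
      rw [hdd, Finset.sum_range_succ, if_neg (by omega)]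
      rw [add_zero]
      refine Finset.sum_congr rfl fun k hk => ?_
      rw [Finset.mem_range] at hk
      rw [if_pos (by omega)]
    rw [htrunc, htrunc]
    have hofs : ∀ (f : ℕ → ℝ) (n : ℕ),
        ∑ k ∈ Finset.range n, ((f k : ℝ) : ℂ) = ((∑ k ∈ Finset.range n, f k : ℝ) : ℂ) := by
      intro f n
      rw [Complex.ofReal_sum]
    rw [hofs (fun k => cγ * (b k)^2) d, hofs (fun k => -(b k * b (k+1) / 2)) (d-1),
      hofs (fun k => -(b (k+1) * b k / 2)) (d-1), ← Complex.ofReal_add, ← Complex.ofReal_add]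
    rw [Complex.ofReal_inj]
    have hA : ∑ k ∈ Finset.range d, cγ * (b k)^2 = cγ * ∑ k ∈ Finset.range d, (b k)^2 :=
      (Finset.mul_sum _ _ _).symm
    have hBC : ∑ k ∈ Finset.range (d-1), -(b k * b (k+1) / 2)
        + ∑ k ∈ Finset.range (d-1), -(b (k+1) * b k / 2)
        = -∑ k ∈ Finset.range (d-1), (b k) * (b (k+1)) := by
      rw [← Finset.sum_add_distrib, ← Finset.sum_neg_distrib]
      exact Finset.sum_congr rfl fun k _ => by ring
    linarith
  -- Way 2 : termwise, each j contributes a nonpositive real number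
  set P : Fin i → ℂ := fun j => ∑ k ∈ Finset.range d, (b k : ℂ) * (u j)^(k:ℕ) with hPdef
  have hway2 : S = ∑ j : Fin i,
      (((w j * (cγ - Real.cos (ψ j)) * Complex.normSq (P j) : ℝ)) : ℂ) := by
    have hstep1 : S = ∑ j : Fin i, ∑ k ∈ Finset.range d, ∑ l ∈ Finset.range d, t k l j := by
      rw [hSdef]
      rw [Finset.sum_congr rfl (fun k _ => Finset.sum_comm)]
      exact Finset.sum_comm
    rw [hstep1]
    refine Finset.sum_congr rfl fun j _ => ?_
    have hcosψ : Complex.cos ((ψ j : ℝ) : ℂ) = ((u j) + (u j)⁻¹)/2 := by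
      have h2c := Complex.two_cos ((ψ j : ℝ) : ℂ)
      rw [hudef]
      simp only []
      rw [← Complex.exp_neg]
      rw [neg_mul] at h2c
      linear_combination h2c / 2
    have hconjP : (starRingEnd ℂ) (P j) = ∑ l ∈ Finset.range d, (b l : ℂ) * (u j)^(-(l:ℤ)) := by
      rw [hPdef]
      simp only [map_sum, map_mul, Complex.conj_ofReal]
      refine Finset.sum_congr rfl fun l _ => ?_
      congr 1
      have hconj : (starRingEnd ℂ) (u j) = (u j)⁻¹ := by
        rw [hudef]
        simp only []
        rw [← Complex.exp_conj, ← Complex.exp_neg]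
        congr 1
        simp [Complex.conj_ofReal]
      rw [map_pow, hconj, inv_pow, ← zpow_natCast (u j) l, ← zpow_neg]
    have hRHS : (w j : ℂ) * ((cγ:ℂ) - Complex.cos ((ψ j : ℝ):ℂ)) * (P j * (starRingEnd ℂ) (P j))
        = ∑ k ∈ Finset.range d, ∑ l ∈ Finset.range d,
            (w j:ℂ) * ((cγ:ℂ) - ((u j) + (u j)⁻¹)/2)
              * (((b k:ℂ) * (u j)^(k:ℕ)) * ((b l:ℂ) * (u j)^(-(l:ℤ)))) := by
      rw [hcosψ, hconjP, hPdef]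
      simp only []
      rw [Finset.sum_mul_sum]
      rw [Finset.mul_sum]
      exact Finset.sum_congr rfl fun k _ => by rw [Finset.mul_sum]
    have hterm2 : ∀ k ∈ Finset.range d, ∀ l ∈ Finset.range d,
        t k l j = (w j:ℂ) * ((cγ:ℂ) - ((u j) + (u j)⁻¹)/2)
              * (((b k:ℂ) * (u j)^(k:ℕ)) * ((b l:ℂ) * (u j)^(-(l:ℤ)))) := by
      intro k _ l _
      rw [htdef]
      simp only []
      have hu := hu_ne j
      have e1 : (u j)^((k:ℤ)-(l:ℤ)) = (u j)^(k:ℕ) * ((u j)^(l:ℕ))⁻¹ := by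
        rw [zpow_sub₀ hu, zpow_natCast, zpow_natCast, div_eq_mul_inv]
      have e2 : (u j)^((k:ℤ)-(l:ℤ)+1) = (u j)^(k:ℕ) * ((u j)^(l:ℕ))⁻¹ * (u j) := by
        rw [zpow_add_one₀ hu, e1]
      have e3 : (u j)^((k:ℤ)-(l:ℤ)-1) = (u j)^(k:ℕ) * ((u j)^(l:ℕ))⁻¹ * (u j)⁻¹ := by
        rw [zpow_sub_one₀ hu, e1]
      have e4 : (u j)^(-(l:ℤ)) = ((u j)^(l:ℕ))⁻¹ := by
        rw [zpow_neg, zpow_natCast]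
      rw [e1, e2, e3, e4]
      ring
    rw [Finset.sum_congr rfl (fun k hk => Finset.sum_congr rfl (fun l hl => hterm2 k hk l hl)),
      ← hRHS, Complex.mul_conj, ← Complex.ofReal_cos]
    push_cast
    ring
  -- compare the two computations
  have hreal : cγ * (∑ k ∈ Finset.range d, (b k)^2)
      - (∑ k ∈ Finset.range (d-1), (b k) * (b (k+1)))
      = ∑ j : Fin i, w j * (cγ - Real.cos (ψ j)) * Complex.normSq (P j) := by
    have hh := hway1.symm.trans hway2
    rw [← Complex.ofReal_sum] at hh
    exact_mod_cast hh
  -- the sum is nonpositive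
  have hmi : m ≤ i := le_of_lt (lt_of_le_of_lt (Nat.le_mul_of_pos_right m hd) h1)
  have hπ := Real.pi_pos
  have hγ0 : 0 ≤ γ := by rw [hγdef]; positivity
  have hγπ : γ ≤ π := by
    rw [hγdef, div_le_iff₀ hiR]
    have him : ((i-m:ℕ):ℝ) ≤ (i:ℝ) := by exact_mod_cast Nat.sub_le i m
    nlinarith
  have hle : ∑ j : Fin i, w j * (cγ - Real.cos (ψ j)) * Complex.normSq (P j) ≤ 0 := by
    apply Finset.sum_nonpos
    intro j _
    by_cases hwj : w j = 0
    · simp [hwj]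
    · have hjle : (j:ℕ) ≤ i - m := by
        by_contra hcon2
        exact hwj (hsupp j (by omega))
      have hψle : |ψ j| ≤ γ := by
        rw [hψdef]
        simp only []
        rw [abs_le]
        have hj' : ((j:ℕ):ℝ) ≤ ((i-m:ℕ):ℝ) := by exact_mod_cast hjle
        have h2γ : 2*π*((i-m:ℕ):ℝ)/(i:ℝ) = 2*γ := by rw [hγdef]; ring
        have hmono : 2*π*((j:ℕ):ℝ)/(i:ℝ) ≤ 2*π*((i-m:ℕ):ℝ)/(i:ℝ) := by
          rw [div_le_div_iff_of_pos_right hiR]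
          nlinarith
        have hnn : (0:ℝ) ≤ 2*π*((j:ℕ):ℝ)/(i:ℝ) := by positivity
        constructor
        · linarith
        · linarith [hmono, h2γ]
      have hcos : cγ ≤ Real.cos (ψ j) := by
        rw [hcγdef, ← Real.cos_abs (ψ j)]
        exact Real.cos_le_cos_of_nonneg_of_le_pi (abs_nonneg _) hγπ hψle
      have h6 : 0 ≤ Complex.normSq (P j) := Complex.normSq_nonneg _
      have h7 : 0 ≤ w j := hw0 j
      nlinarith [mul_nonneg (mul_nonneg h7 (show (0:ℝ) ≤ Real.cos (ψ j) - cγ by linarith)) h6]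
  -- but the explicit value is positive
  have h1sq : ∀ k : ℕ, ((-1:ℝ)^k)^2 = 1 := by
    intro k
    rw [← pow_mul, mul_comm, pow_mul, neg_one_sq, one_pow]
  have hb2 : ∀ k : ℕ, (b k)^2 = Real.sin ((k+1)*α)^2 := by
    intro k
    rw [hbdef]
    simp only []
    rw [mul_pow, h1sq, one_mul]
  have hbb : ∀ k : ℕ, b k * b (k+1) = -(Real.sin ((k+1)*α) * Real.sin ((k+2)*α)) := by
    intro k
    rw [hbdef]
    simp only []
    have harg : (((k+1:ℕ)):ℝ) + 1 = (k:ℝ) + 2 := by push_cast; ring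
    rw [harg]
    push_cast
    linear_combination (-(Real.sin (((k:ℝ)+1)*α) * Real.sin (((k:ℝ)+2)*α))) * h1sq k
  have hα0 : 0 < α := by rw [hαdef]; positivity
  have hαπ : α < π := by
    rw [hαdef]
    apply div_lt_self hπ
    have : (1:ℝ) ≤ (d:ℝ) := by exact_mod_cast hd
    linarith
  have hB2pos : 0 < ∑ k ∈ Finset.range d, (b k)^2 := by
    apply Finset.sum_pos'
    · intro k _; exact sq_nonneg _
    · refine ⟨0, Finset.mem_range.mpr hd, ?_⟩
      rw [hb2 0]
      norm_num
      exact pow_pos (Real.sin_pos_of_pos_of_lt_pi hα0 hαπ) 2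
  have hid := sin_cos_sum_identity d hd
  rw [← hαdef] at hid
  have hB1 : ∑ k ∈ Finset.range (d-1), (b k) * (b (k+1))
      = -(Real.cos α * ∑ k ∈ Finset.range d, (b k)^2) := by
    rw [Finset.sum_congr rfl (fun k _ => hbb k)]
    rw [Finset.sum_neg_distrib, hid]
    rw [Finset.sum_congr rfl (fun (k:ℕ) (_ : k ∈ Finset.range d) => (hb2 k).symm)]
  have hγlt : γ < π - α := by
    have him2 : ((i-m:ℕ):ℝ) = (i:ℝ) - (m:ℝ) := by
      rw [Nat.cast_sub hmi]
    have h2' : (i:ℝ) < (m:ℝ)*((d:ℝ)+1) := by exact_mod_cast h2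
    have hd1pos : (0:ℝ) < (d:ℝ)+1 := by positivity
    have hπα : π - α = π*(d:ℝ)/((d:ℝ)+1) := by
      rw [hαdef]
      field_simp
      ring
    have hkey : ((i:ℝ)-(m:ℝ))*((d:ℝ)+1) < (i:ℝ)*(d:ℝ) := by
      have e : ((i:ℝ)-(m:ℝ))*((d:ℝ)+1) = (i:ℝ)*(d:ℝ) + ((i:ℝ) - (m:ℝ)*((d:ℝ)+1)) := by ring
      rw [e]
      linarith
    rw [hγdef, him2, hπα, div_lt_div_iff₀ hiR hd1pos]
    calc π * ((i:ℝ)-(m:ℝ)) * ((d:ℝ)+1) = π * (((i:ℝ)-(m:ℝ))*((d:ℝ)+1)) := by ring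
      _ < π * ((i:ℝ)*(d:ℝ)) := mul_lt_mul_of_pos_left hkey hπ
      _ = π*(d:ℝ)*(i:ℝ) := by ring
  have hcosγα : -Real.cos α < cγ := by
    have hkey : Real.cos (π - α) < Real.cos γ :=
      Real.cos_lt_cos_of_nonneg_of_le_pi hγ0 (by linarith) hγlt
    rw [Real.cos_pi_sub] at hkey
    rw [hcγdef]
    exact hkey
  have hpos : 0 < cγ * (∑ k ∈ Finset.range d, (b k)^2)
      - (∑ k ∈ Finset.range (d-1), (b k) * (b (k+1))) := by
    rw [hB1]
    nlinarith
  rw [hreal] at hpos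
  linarith
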